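/- Consider the 'marginal heads' map from size-K multisets over {0,1}^N to {0,…,K}^N, sending φ to the tuple of counts (Σ_{b : b_i = 1} φ(b))_{i=1,…,N}. Then for any tuple (n_1,…,n_N) with each n_i ≤ K, the sum over all φ in the fiber of the multinomial coefficients K!/∏_b φ(b)! equals ∏_{i=1}^{N} (K choose n_i). -/

import Mathlib

open Finset


variable {α : Type*} [DecidableEq α]

def tupleMS {K : ℕ} (f : Fin K → α) : Multiset α := Multiset.map f Finset.univ.val

lemma tupleMS_card {K : ℕ} (f : Fin K → α) : Multiset.card (tupleMS f) = K := by
  simp [tupleMS]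

lemma tupleMS_count {K : ℕ} (f : Fin K → α) (a : α) :
    Multiset.count a (tupleMS f) = (univ.filter (fun k => f k = a)).card := by
  rw [tupleMS, Multiset.count_map]
  simp [Finset.card, Finset.filter, eq_comm]

lemma tupleMS_eq_sum {K : ℕ} (f : Fin K → α) : tupleMS f = ∑ k : Fin K, {f k} := by
  rw [tupleMS, ← Finset.sum_multiset_singleton]
  have := map_sum (Multiset.mapAddMonoidHom f) (fun k : Fin K => ({k} : Multiset (Fin K))) Finset.univ
  simpa using this

lemma tupleMS_snoc {K : ℕ} (f : Fin (K + 1) → α) :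
    tupleMS f = tupleMS (f ∘ Fin.castSucc) + {f (Fin.last K)} := by
  rw [tupleMS_eq_sum, tupleMS_eq_sum, Fin.sum_univ_castSucc]
  rfl

lemma card_tuple_fiber [Fintype α] :
    ∀ (K : ℕ) (m : Multiset α), Multiset.card m = K →
      (univ.filter (fun f : Fin K → α => tupleMS f = m)).card *
        ∏ a : α, (Multiset.count a m).factorial = K.factorial := by
  intro K
  induction K with
  | zero =>
    intro m hm
    rw [Multiset.card_eq_zero] at hm
    subst hm
    have h1 : (univ.filter (fun f : Fin 0 → α => tupleMS f = 0)) = univ := by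
      ext f; simp [tupleMS]
    rw [h1]
    simp
  | succ K ih =>
    intro m hm
    have hsplit : (univ.filter (fun f : Fin (K+1) → α => tupleMS f = m)).card
        = ∑ a ∈ m.toFinset,
            (univ.filter (fun g : Fin K → α => tupleMS g = m.erase a)).card := by
      rw [Finset.card_eq_sum_card_fiberwise
        (f := fun f : Fin (K+1) → α => f (Fin.last K)) (t := m.toFinset)
        (fun f hf => by
          simp only [Finset.mem_coe, mem_filter, mem_univ, true_and] at hf
          rw [Finset.mem_coe, Multiset.mem_toFinset, ← hf]
          exact Multiset.mem_map_of_mem f (Finset.mem_univ_val _))]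
      refine Finset.sum_congr rfl fun a ha => ?_
      rw [Multiset.mem_toFinset] at ha
      apply Finset.card_nbij' (fun f => f ∘ Fin.castSucc) (fun g => Fin.snoc g a)
      · intro f hf
        simp only [Finset.mem_coe, mem_filter, mem_univ, true_and] at hf ⊢
        obtain ⟨h1, h2⟩ := hf
        have := tupleMS_snoc f
        rw [h1, h2] at this
        rw [this, show (tupleMS (f ∘ Fin.castSucc) + {a})
            = a ::ₘ tupleMS (f ∘ Fin.castSucc) by rw [add_comm]; rfl,
          Multiset.erase_cons_head]
      · intro g hg
        simp only [Finset.mem_coe, mem_filter, mem_univ, true_and] at hg ⊢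
        constructor
        · rw [tupleMS_snoc]
          have h1 : (Fin.snoc g a : Fin (K+1) → α) ∘ Fin.castSucc = g := by
            funext k; simp [Fin.snoc_castSucc]
          have h2 : (Fin.snoc g a : Fin (K+1) → α) (Fin.last K) = a := by simp
          rw [h1, h2, hg, add_comm]
          rw [show ({a} + Multiset.erase m a) = a ::ₘ Multiset.erase m a from rfl]
          exact Multiset.cons_erase ha
        · simp
      · intro f hf
        simp only [Finset.mem_coe, mem_filter, mem_univ, true_and] at hf
        funext k
        rw [← hf.2]
        exact Fin.snoc_init_self f ▸ congrFun (Fin.snoc_init_self f) k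
      · intro g hg
        funext k; simp [Fin.snoc_castSucc]
    rw [hsplit, Finset.sum_mul]
    have key : ∀ a ∈ m.toFinset,
        (univ.filter (fun g : Fin K → α => tupleMS g = m.erase a)).card *
          ∏ b : α, (Multiset.count b m).factorial
        = Multiset.count a m * K.factorial := by
      intro a ha
      rw [Multiset.mem_toFinset] at ha
      have hpos : 0 < Multiset.count a m := Multiset.count_pos.2 ha
      have hprod : ∏ b : α, (Multiset.count b m).factorial
          = Multiset.count a m * ∏ b : α, (Multiset.count b (m.erase a)).factorial := by
        rw [← Finset.mul_prod_erase univ _ (mem_univ a),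
            ← Finset.mul_prod_erase univ (fun b => (Multiset.count b (m.erase a)).factorial)
              (mem_univ a)]
        have h1 : Multiset.count a (m.erase a) = Multiset.count a m - 1 :=
          Multiset.count_erase_self a m
        have h2 : ∀ b ∈ univ.erase a,
            (Multiset.count b (m.erase a)).factorial = (Multiset.count b m).factorial := by
          intro b hb
          rw [Multiset.count_erase_of_ne (Finset.ne_of_mem_erase hb) m]
        rw [Finset.prod_congr rfl h2, h1, ← mul_assoc]
        congr 1
        rw [← Nat.succ_pred_eq_of_pos hpos, Nat.factorial_succ]
        simp
      rw [hprod, ← mul_assoc, mul_comm _ (Multiset.count a m), mul_assoc,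
        ih (m.erase a) (by rw [Multiset.card_erase_of_mem ha, hm]; rfl)]
    rw [Finset.sum_congr rfl key, ← Finset.sum_mul, Multiset.toFinset_sum_count_eq, hm,
      Nat.factorial_succ]

lemma count_col (K c : ℕ) :
    (univ.filter fun h : Fin K → Fin 2 => (univ.filter fun k => h k = 1).card = c).card
      = K.choose c := by
  have hfix : ∀ s : Finset (Fin K),
      univ.filter (fun k => (if k ∈ s then (1 : Fin 2) else 0) = 1) = s := by
    intro s; ext k; by_cases hk : k ∈ s <;> simp [hk]
  have hpc : (Finset.powersetCard c (univ : Finset (Fin K))).card = K.choose c := by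
    rw [Finset.card_powersetCard, Finset.card_univ, Fintype.card_fin]
  rw [← hpc]
  apply Finset.card_nbij' (fun h => univ.filter fun k => h k = 1)
    (fun s k => if k ∈ s then 1 else 0)
  · intro h hh
    simp only [Finset.mem_coe, mem_filter, mem_univ, true_and] at hh
    simpa [Finset.mem_powersetCard_univ] using hh
  · intro s hs
    simp only [Finset.mem_coe, Finset.mem_powersetCard_univ] at hs
    simp only [Finset.mem_coe, mem_filter, mem_univ, true_and]
    rw [hfix s, hs]
  · intro h _
    funext k
    by_cases hk : h k = 1
    · simp [hk]
    · simp only [mem_filter, mem_univ, true_and, hk, if_false]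
      have h1 : (h k).val < 2 := (h k).isLt
      have h2 : (h k).val ≠ 1 := fun c => hk (Fin.ext c)
      exact Fin.ext (by omega : (0 : Fin 2).val = (h k).val)
  · intro s hs
    exact hfix s

lemma marginal_eq (N K : ℕ) (f : Fin K → (Fin N → Fin 2)) (i : Fin N) :
    ∑ b ∈ univ.filter (fun b : Fin N → Fin 2 => b i = 1),
        Multiset.count b (tupleMS f)
      = (univ.filter (fun k => f k i = 1)).card := by
  have H : ∀ k ∈ univ.filter (fun k => f k i = 1),
      f k ∈ univ.filter (fun b : Fin N → Fin 2 => b i = 1) := by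
    intro k hk
    simp only [mem_filter, mem_univ, true_and] at hk ⊢
    exact hk
  rw [Finset.card_eq_sum_card_fiberwise H]
  refine Finset.sum_congr rfl fun b hb => ?_
  simp only [mem_filter, mem_univ, true_and] at hb
  rw [tupleMS_count]
  congr 1
  ext k
  simp only [mem_filter, mem_univ, true_and]
  constructor
  · intro h; exact ⟨by rw [h]; exact hb, h⟩
  · exact And.right

theorem marginal_heads_coefficient_multivariate (N K : ℕ) (n : Fin N → ℕ)
    (hn : ∀ i, n i ≤ K) :
    ∑ φ ∈ Finset.univ.filter (fun φ : Sym (Fin N → Fin 2) K =>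
        ∀ i : Fin N,
          (∑ b ∈ Finset.univ.filter (fun b : Fin N → Fin 2 => b i = 1),
            Multiset.count b (φ : Multiset (Fin N → Fin 2))) = n i),
      K.factorial /
        ∏ b : Fin N → Fin 2, (Multiset.count b (φ : Multiset (Fin N → Fin 2))).factorial
      = ∏ i : Fin N, K.choose (n i) := by
  classical
  have hcoeff : ∀ φ : Sym (Fin N → Fin 2) K,
      K.factorial / ∏ b : Fin N → Fin 2,
          (Multiset.count b (φ : Multiset (Fin N → Fin 2))).factorial
        = (univ.filter (fun f : Fin K → (Fin N → Fin 2) =>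
            tupleMS f = (φ : Multiset (Fin N → Fin 2)))).card := by
    intro φ
    have h := card_tuple_fiber K (φ : Multiset (Fin N → Fin 2)) φ.2
    have hpos : 0 < ∏ b : Fin N → Fin 2,
        (Multiset.count b (φ : Multiset (Fin N → Fin 2))).factorial :=
      Finset.prod_pos fun b _ => Nat.factorial_pos _
    rw [← h, Nat.mul_div_cancel _ hpos]
  rw [Finset.sum_congr rfl fun φ _ => hcoeff φ]
  set s := univ.filter (fun f : Fin K → (Fin N → Fin 2) =>
    ∀ i, (univ.filter fun k => f k i = 1).card = n i) with hs
  have H : ∀ f ∈ s, (Sym.mk (tupleMS f) (tupleMS_card f) : Sym (Fin N → Fin 2) K)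
      ∈ univ.filter (fun φ : Sym (Fin N → Fin 2) K =>
        ∀ i : Fin N,
          (∑ b ∈ Finset.univ.filter (fun b : Fin N → Fin 2 => b i = 1),
            Multiset.count b (φ : Multiset (Fin N → Fin 2))) = n i) := by
    intro f hf
    simp only [hs, mem_filter, mem_univ, true_and] at hf ⊢
    intro i
    rw [show ((Sym.mk (tupleMS f) (tupleMS_card f) : Sym (Fin N → Fin 2) K)
        : Multiset (Fin N → Fin 2)) = tupleMS f from rfl, marginal_eq]
    exact hf i
  have step2 : s.card = ∑ φ ∈ univ.filter (fun φ : Sym (Fin N → Fin 2) K =>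
        ∀ i : Fin N,
          (∑ b ∈ Finset.univ.filter (fun b : Fin N → Fin 2 => b i = 1),
            Multiset.count b (φ : Multiset (Fin N → Fin 2))) = n i),
      (univ.filter (fun f : Fin K → (Fin N → Fin 2) =>
        tupleMS f = (φ : Multiset (Fin N → Fin 2)))).card := by
    rw [Finset.card_eq_sum_card_fiberwise H]
    refine Finset.sum_congr rfl fun φ hφ => ?_
    congr 1
    ext f
    simp only [hs, mem_filter, mem_univ, true_and] at hφ ⊢
    constructor
    · rintro ⟨h1, rfl⟩
      rfl
    · intro h
      have hS : (Sym.mk (tupleMS f) (tupleMS_card f) : Sym (Fin N → Fin 2) K) = φ :=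
        Sym.coe_injective h
      refine ⟨fun i => ?_, hS⟩
      rw [← marginal_eq, h]
      exact hφ i
  rw [← step2]
  have step3a : s.card = (univ.filter fun g : Fin N → Fin K → Fin 2 =>
      ∀ i, (univ.filter fun k => g i k = 1).card = n i).card := by
    apply Finset.card_nbij' (fun f i k => f k i) (fun g k i => g i k)
    · intro a ha
      simp only [Finset.mem_coe, hs, mem_filter, mem_univ, true_and] at ha ⊢
      exact ha
    · intro a ha
      simp only [Finset.mem_coe, mem_filter, mem_univ, true_and] at ha
      simp only [Finset.mem_coe, hs, mem_filter, mem_univ, true_and]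
      exact ha
    · intro a _
      rfl
    · intro a _
      rfl
  have step3b : (univ.filter fun g : Fin N → Fin K → Fin 2 =>
      ∀ i, (univ.filter fun k => g i k = 1).card = n i)
      = Fintype.piFinset (fun i => univ.filter
          (fun h : Fin K → Fin 2 => (univ.filter fun k => h k = 1).card = n i)) := by
    ext g
    simp [Fintype.mem_piFinset]
  rw [step3a, step3b, Fintype.card_piFinset]
  exact Finset.prod_congr rfl fun i _ => count_col K (n i)
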